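/- If an antiunitary operator ε on a finite-dimensional Hilbert space h and a self-adjoint operator Y on h satisfy (e^{-βY/2} ε)² = 1 and ε² = 1, then ε Y ε = −Y. -/

import Mathlib

open Matrix ComplexConjugate MeasureTheory
open scoped Kronecker ComplexOrder

noncomputable section

/-- Ampliation `Φ ⊗ id_k` of a superoperator, acting on `B(K ⊗ ℂᵏ)`. -/
def amp {n m k : Type*} [Fintype n] [Fintype m] [Fintype k]
    (Φ : Matrix n n ℂ → Matrix m m ℂ) :
    Matrix (n × k) (n × k) ℂ → Matrix (m × k) (m × k) ℂ :=
  fun M => Matrix.of fun p q => Φ (Matrix.of fun a b => M (a, p.2) (b, q.2)) p.1 q.1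

/-- A map between matrix algebras is positive if it preserves positive semidefiniteness. -/
def IsPosMap {n m : Type*} [Fintype n] [Fintype m]
    (Φ : Matrix n n ℂ → Matrix m m ℂ) : Prop :=
  ∀ A : Matrix n n ℂ, A.PosSemidef → (Φ A).PosSemidef

/-- Complete positivity: all ampliations `Φ ⊗ id_k` are positive. -/
def IsCP {n m : Type*} [Fintype n] [Fintype m]
    (Φ : Matrix n n ℂ → Matrix m m ℂ) : Prop :=
  ∀ k : ℕ, IsPosMap (amp (k := Fin k) Φ)

/-- Action of a supermatrix (matrix on index `n × n`) as a linear map on `B(ℂⁿ)`. -/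
def supAct {n : Type*} [Fintype n]
    (L : Matrix (n × n) (n × n) ℂ) (A : Matrix n n ℂ) : Matrix n n ℂ :=
  Matrix.of fun i j => ∑ p : n × n, L (i, j) p * A p.1 p.2

/-- The standard (antilinear in the first slot) inner product on `ι → ℂ`. -/
def cinner {ι : Type*} [Fintype ι] (v w : ι → ℂ) : ℂ := ∑ i, conj (v i) * w i

/-- Elementary tensor of two vectors. -/
def tvec {n d : Type*} (φ : n → ℂ) (w : d → ℂ) : n × d → ℂ := fun p => φ p.1 * w p.2

/-- Contraction `(φ| ⊗ 1 : K ⊗ h → h`. -/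
def contrL {n d : Type*} [Fintype n] (φ : n → ℂ) (x : n × d → ℂ) : d → ℂ :=
  fun a => ∑ i, conj (φ i) * x (i, a)

/-- Partial trace over the second tensor factor. -/
def ptr {n d : Type*} [Fintype d] (M : Matrix (n × d) (n × d) ℂ) : Matrix n n ℂ :=
  Matrix.of fun i j => ∑ a, M (i, a) (j, a)

/-- star commutes with mulVec. -/
lemma star_mulVec' {d : ℕ} (M : Matrix (Fin d) (Fin d) ℂ) (v : Fin d → ℂ) :
    star (M.mulVec v) = (M.map star).mulVec (star v) := by
  funext i
  simp [Matrix.mulVec, dotProduct, Matrix.map_apply, star_sum]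

/-- conj map of exp. -/
lemma exp_map_star {d : ℕ} (A : Matrix (Fin d) (Fin d) ℂ) :
    (NormedSpace.exp A).map star = NormedSpace.exp (A.map star) := by
  have h1 : A.map star = Aᴴᵀ := by
    funext i j; simp [Matrix.conjTranspose_apply, Matrix.transpose_apply, Matrix.map_apply]
  have h2 : (NormedSpace.exp A).map star = ((NormedSpace.exp A)ᴴ)ᵀ := by
    funext i j; simp [Matrix.conjTranspose_apply, Matrix.transpose_apply, Matrix.map_apply]
  rw [h1, h2, ← Matrix.exp_conjTranspose, ← Matrix.exp_transpose]

/-- exp is injective on Hermitian matrices. -/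
lemma herm_exp_inj {d : ℕ} {A B : Matrix (Fin d) (Fin d) ℂ}
    (hA : A.IsHermitian) (hB : B.IsHermitian)
    (h : NormedSpace.exp A = NormedSpace.exp B) : A = B := by
  classical
  set V : Matrix (Fin d) (Fin d) ℂ := (hA.eigenvectorUnitary : Matrix (Fin d) (Fin d) ℂ) with hV
  set W : Matrix (Fin d) (Fin d) ℂ := (hB.eigenvectorUnitary : Matrix (Fin d) (Fin d) ℂ) with hW
  have hVVs : V * star V = 1 := Matrix.mem_unitaryGroup_iff.mp hA.eigenvectorUnitary.2
  have hVsV : star V * V = 1 := mul_eq_one_comm.mp hVVs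
  have hWWs : W * star W = 1 := Matrix.mem_unitaryGroup_iff.mp hB.eigenvectorUnitary.2
  have hWsW : star W * W = 1 := mul_eq_one_comm.mp hWWs
  set D : Matrix (Fin d) (Fin d) ℂ := Matrix.diagonal (RCLike.ofReal ∘ hA.eigenvalues) with hD
  set E : Matrix (Fin d) (Fin d) ℂ := Matrix.diagonal (RCLike.ofReal ∘ hB.eigenvalues) with hE
  have hVinv : V⁻¹ = star V := Matrix.inv_eq_left_inv hVsV
  have hWinv : W⁻¹ = star W := Matrix.inv_eq_left_inv hWsW
  have hVu : IsUnit V := ⟨⟨V, star V, hVVs, hVsV⟩, rfl⟩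
  have hWu : IsUnit W := ⟨⟨W, star W, hWWs, hWsW⟩, rfl⟩
  have hAe : A = V * D * star V := hA.spectral_theorem
  have hBe : B = W * E * star W := hB.spectral_theorem
  have hexpA : NormedSpace.exp A = V * NormedSpace.exp D * star V := by
    rw [hAe, ← hVinv]; exact Matrix.exp_conj V D hVu
  have hexpB : NormedSpace.exp B = W * NormedSpace.exp E * star W := by
    rw [hBe, ← hWinv]; exact Matrix.exp_conj W E hWu
  set M : Matrix (Fin d) (Fin d) ℂ := star V * W with hM
  have key : NormedSpace.exp D * M = M * NormedSpace.exp E := by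
    have h1 : V * NormedSpace.exp D * star V = W * NormedSpace.exp E * star W := by
      rw [← hexpA, ← hexpB, h]
    have h2 := congrArg (fun X => star V * X * W) h1
    simp only [Matrix.mul_assoc] at h2
    rw [hWsW, Matrix.mul_one, ← Matrix.mul_assoc (star V) V, hVsV, Matrix.one_mul] at h2
    rw [hM]
    simp only [Matrix.mul_assoc]
    exact h2
  have hDE : D * M = M * E := by
    rw [hD, hE] at key ⊢
    rw [Matrix.exp_diagonal, Matrix.exp_diagonal, Pi.exp_def, Pi.exp_def] at key
    ext i j
    have hk := congrFun (congrFun key i) j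
    rw [Matrix.diagonal_mul, Matrix.mul_diagonal] at hk ⊢
    rcases eq_or_ne (M i j) 0 with h0 | h0
    · rw [h0, mul_zero, zero_mul]
    · have hk' := hk.trans (mul_comm _ _)
      have hexp := mul_right_cancel₀ h0 hk'
      have heq : hA.eigenvalues i = hB.eigenvalues j := by
        simp only [Function.comp_apply, RCLike.ofReal_alg, smul_eq_mul, mul_one,
          Complex.coe_algebraMap] at hexp
        rw [← Complex.exp_eq_exp_ℂ, ← Complex.ofReal_exp, ← Complex.ofReal_exp] at hexp
        exact Real.exp_injective (by exact_mod_cast hexp)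
      simp only [Function.comp_apply, heq, mul_comm]
  have lhs : V * (D * M) * star W = A := by
    rw [hM, hAe]
    simp only [Matrix.mul_assoc]
    rw [hWWs, Matrix.mul_one]
  have rhs : V * (M * E) * star W = B := by
    rw [hM, hBe]
    simp only [Matrix.mul_assoc]
    rw [← Matrix.mul_assoc V (star V), hVVs, Matrix.one_mul]
  calc A = V * (D * M) * star W := lhs.symm
    _ = V * (M * E) * star W := by rw [hDE]
    _ = B := rhs

/-- If an antiunitary `ε` satisfies `(e^{−βY/2} ε)² = 1` and `ε² = 1`, then `ε Y ε = −Y`. -/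
theorem antiunitary_anticommutes_Y {d : ℕ} (β : ℝ) (hβ : 0 < β)
    (Y : Matrix (Fin d) (Fin d) ℂ) (hY : Y.IsHermitian)
    (ε : (Fin d → ℂ) → (Fin d → ℂ))
    (hadd : ∀ v w, ε (v + w) = ε v + ε w)
    (hsmul : ∀ (c : ℂ) v, ε (c • v) = conj c • ε v)
    (hinner : ∀ v w, cinner (ε v) (ε w) = cinner w v)
    (hsurj : Function.Surjective ε)
    (hsq : ∀ v, (NormedSpace.exp ((-(β : ℂ) / 2) • Y)).mulVec
        (ε ((NormedSpace.exp ((-(β : ℂ) / 2) • Y)).mulVec (ε v))) = v)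
    (heps2 : ∀ v, ε (ε v) = v) :
    ∀ v, ε (Y.mulVec (ε v)) = -(Y.mulVec v) := by
  classical
  -- linear map `w ↦ ε (star w)` and its matrix `U`
  set L : (Fin d → ℂ) →ₗ[ℂ] (Fin d → ℂ) :=
    { toFun := fun w => ε (star w)
      map_add' := by
        intro a b
        show ε (star (a + b)) = ε (star a) + ε (star b)
        rw [star_add]
        exact hadd _ _
      map_smul' := by
        intro cc a
        show ε (star (cc • a)) = cc • ε (star a)
        rw [star_smul, hsmul]
        simp } with hLdef
  set U : Matrix (Fin d) (Fin d) ℂ := LinearMap.toMatrix' L with hUdef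
  have hU : ∀ w, ε w = U.mulVec (star w) := by
    intro w
    calc ε w = ε (star (star w)) := by rw [star_star]
      _ = L (star w) := rfl
      _ = Matrix.toLin' U (star w) := by rw [hUdef, Matrix.toLin'_toMatrix']
      _ = U.mulVec (star w) := rfl
  have key : ∀ (M : Matrix (Fin d) (Fin d) ℂ) w,
      ε (M.mulVec (ε w)) = (U * M.map star * U.map star).mulVec w := by
    intro M w
    rw [hU (M.mulVec (ε w)), star_mulVec' M, hU w, star_mulVec' U, star_star,
      Matrix.mulVec_mulVec, Matrix.mulVec_mulVec]
  have mveq : ∀ (M N : Matrix (Fin d) (Fin d) ℂ),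
      (∀ w, M.mulVec w = N.mulVec w) → M = N := by
    intro M N hmn
    ext i j
    have := congrFun (hmn (Pi.single j 1)) i
    simpa [Matrix.mulVec_single] using this
  have hstar1 : (1 : Matrix (Fin d) (Fin d) ℂ).map star = 1 := by
    ext i j
    simp [Matrix.one_apply, Matrix.map_apply, apply_ite (star : ℂ → ℂ)]
  -- `ε² = 1` gives `U * conj U = 1`
  have hUUc : U * U.map star = 1 := by
    apply mveq
    intro w
    have h1 := key 1 w
    rw [Matrix.one_mulVec, heps2 w, hstar1, Matrix.mul_one] at h1
    rw [Matrix.one_mulVec]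
    exact h1.symm
  -- unitarity: `Uᴴ * U = 1`
  have hsingle : ∀ i : Fin d, star (Pi.single i 1 : Fin d → ℂ) = Pi.single i 1 := by
    intro i
    funext k
    simp [Pi.single_apply, apply_ite (star : ℂ → ℂ)]
  have hεs : ∀ i : Fin d, ε (Pi.single i 1) = fun k => U k i := by
    intro i
    rw [hU, hsingle]
    funext k
    simp [Matrix.mulVec_single]
  have hUnit : Uᴴ * U = 1 := by
    ext i j
    have h2 := hinner (Pi.single i 1) (Pi.single j 1)
    rw [hεs i, hεs j] at h2
    simp only [cinner, starRingEnd_apply] at h2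
    simp only [Matrix.mul_apply, Matrix.conjTranspose_apply, Matrix.one_apply]
    rw [h2]
    simp [Pi.single_apply, apply_ite (star : ℂ → ℂ), eq_comm]
  have hUc_eq : U.map star = Uᴴ := by
    calc U.map star = 1 * U.map star := (Matrix.one_mul _).symm
      _ = (Uᴴ * U) * U.map star := by rw [hUnit]
      _ = Uᴴ * (U * U.map star) := by rw [Matrix.mul_assoc]
      _ = Uᴴ := by rw [hUUc, Matrix.mul_one]
  have hUUh : U * Uᴴ = 1 := by rw [← hUc_eq]; exact hUUc
  have hUinv : U⁻¹ = Uᴴ := Matrix.inv_eq_right_inv hUUh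
  have hUu : IsUnit U := ⟨⟨U, Uᴴ, hUUh, hUnit⟩, rfl⟩
  set c : ℂ := -(β : ℂ) / 2 with hcdef
  have hc : star c = c := by
    rw [hcdef]
    simp [Complex.star_def, map_div₀, map_neg, Complex.conj_ofReal]
  have hc0 : c ≠ 0 := by
    rw [hcdef]
    intro hx
    rw [div_eq_zero_iff, neg_eq_zero] at hx
    rcases hx with hx | hx
    · exact hβ.ne' (by exact_mod_cast hx)
    · norm_num at hx
  set Z : Matrix (Fin d) (Fin d) ℂ := U * Y.map star * Uᴴ with hZ
  set Ex : Matrix (Fin d) (Fin d) ℂ := NormedSpace.exp (c • Y) with hEx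
  have hsmulmap : (c • Y).map star = c • Y.map star := by
    have hc' : (starRingEnd ℂ) c = c := hc
    ext i j
    simp [Matrix.map_apply, star_mul', hc', mul_comm]
  have hEc : Ex.map star = NormedSpace.exp (c • Y.map star) := by
    rw [hEx, exp_map_star, hsmulmap]
  have hconj : U * Ex.map star * Uᴴ = NormedSpace.exp (c • Z) := by
    calc U * Ex.map star * Uᴴ
        = U * NormedSpace.exp (c • Y.map star) * U⁻¹ := by rw [hEc, hUinv]
      _ = NormedSpace.exp (U * (c • Y.map star) * U⁻¹) := (Matrix.exp_conj U _ hUu).symm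
      _ = NormedSpace.exp (c • Z) := by
          rw [hZ, hUinv, Matrix.mul_smul, Matrix.smul_mul]
  have hE1 : Ex * (U * Ex.map star * U.map star) = 1 := by
    apply mveq
    intro w
    have h3 := key Ex w
    have h4 := hsq w
    rw [h3, Matrix.mulVec_mulVec] at h4
    rw [Matrix.one_mulVec]
    exact h4
  have hE2 : Ex * NormedSpace.exp (c • (-Y)) = 1 := by
    have hnp : c • (-Y) = -(c • Y) := by rw [smul_neg]
    rw [hnp, hEx, ← Matrix.exp_add_of_commute (c • Y) (-(c • Y)) ((Commute.refl (c • Y)).neg_right),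
      add_neg_cancel, NormedSpace.exp_zero]
  have hEeq : NormedSpace.exp (c • Z) = NormedSpace.exp (c • (-Y)) := by
    have hx := hE1
    rw [hUc_eq, hconj] at hx
    have h5 : NormedSpace.exp (c • Z) * Ex = 1 := mul_eq_one_comm.mp hx
    calc NormedSpace.exp (c • Z)
        = NormedSpace.exp (c • Z) * (Ex * NormedSpace.exp (c • (-Y))) := by
          rw [hE2, Matrix.mul_one]
      _ = (NormedSpace.exp (c • Z) * Ex) * NormedSpace.exp (c • (-Y)) := by
          rw [Matrix.mul_assoc]
      _ = NormedSpace.exp (c • (-Y)) := by rw [h5, Matrix.one_mul]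
  have hYs : Y.map star = Yᵀ := by
    ext i j
    have := congrFun (congrFun hY j) i
    simpa [Matrix.conjTranspose_apply, Matrix.map_apply, Matrix.transpose_apply] using this
  have hYsh : (Y.map star)ᴴ = Y.map star := by
    ext i j
    have h2 := congrFun (congrFun hY j) i
    simp only [Matrix.conjTranspose_apply] at h2
    simp only [Matrix.conjTranspose_apply, Matrix.map_apply, star_star]
    exact h2.symm
  have hZh : Z.IsHermitian := by
    show Zᴴ = Z
    rw [hZ, Matrix.conjTranspose_mul, Matrix.conjTranspose_mul,
      Matrix.conjTranspose_conjTranspose, hYsh, ← Matrix.mul_assoc]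
  have hcZ : (c • Z).IsHermitian := by
    show (c • Z)ᴴ = c • Z
    rw [Matrix.conjTranspose_smul, hc, hZh.eq]
  have hcY : (c • (-Y)).IsHermitian := by
    show (c • (-Y))ᴴ = c • (-Y)
    rw [Matrix.conjTranspose_smul, hc, Matrix.conjTranspose_neg, hY.eq]
  have h6 : c • Z = c • (-Y) := herm_exp_inj hcZ hcY hEeq
  have hZY : Z = -Y := smul_right_injective _ hc0 h6
  intro v
  have h7 := key Y v
  rw [hUc_eq, ← hZ, hZY, Matrix.neg_mulVec] at h7
  exact h7
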